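/- Simplex bound: for any N ≥ 2 n-dimensional subspaces P_1,...,P_N of R^m, the minimum squared chordal distance satisfies min_{i≠j} d_c²(P_i,P_j) ≤ (n(m−n)/m)·(N/(N−1)). -/

import Mathlib

open Matrix

/-- Simplex bound: for `N ≥ 2` `n`-dimensional subspaces of `ℝ^m`, given by their
orthogonal projection matrices `P i` (symmetric idempotents of trace `n`), some pair
has squared chordal distance `n - trace (P i * P j)` at most
`(n(m-n)/m) * (N/(N-1))`. -/
theorem simplex_bound (n m N : ℕ) (hm : 0 < m) (hnm : n ≤ m) (hN : 2 ≤ N)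
    (P : Fin N → Matrix (Fin m) (Fin m) ℝ)
    (hsymm : ∀ i, (P i)ᵀ = P i)
    (hidem : ∀ i, P i * P i = P i)
    (htr : ∀ i, Matrix.trace (P i) = (n : ℝ)) :
    ∃ i j, i ≠ j ∧
      (n : ℝ) - Matrix.trace (P i * P j) ≤
        ((n : ℝ) * ((m : ℝ) - n) / m) * ((N : ℝ) / ((N : ℝ) - 1)) := by
  classical
  have hm' : (0:ℝ) < m := by exact_mod_cast hm
  have hN' : (2:ℝ) ≤ N := by exact_mod_cast hN
  have hN1 : (0:ℝ) < (N:ℝ) - 1 := by linarith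
  set t : Fin N → Fin N → ℝ := fun i j => Matrix.trace (P i * P j) with ht
  set S : Matrix (Fin m) (Fin m) ℝ := ∑ i, P i with hS
  have hSsymm : ∀ k l, S l k = S k l := by
    intro k l
    have := congrArg (fun M => M k l) (Matrix.transpose_sum (s := Finset.univ) (M := P))
    have h2 : Sᵀ = S := by
      rw [hS, Matrix.transpose_sum]
      exact Finset.sum_congr rfl fun i _ => hsymm i
    calc S l k = Sᵀ k l := rfl
      _ = S k l := by rw [h2]
  have htrS : Matrix.trace S = (N:ℝ) * n := by
    rw [hS, Matrix.trace_sum]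
    simp [htr, Finset.sum_const, mul_comm]
  have hSS : Matrix.trace (S * S) = ∑ i, ∑ j, t i j := by
    rw [hS, Finset.sum_mul_sum]
    rw [Matrix.trace_sum]
    exact Finset.sum_congr rfl fun i _ => Matrix.trace_sum _ _
  -- Cauchy–Schwarz: (trace S)^2 ≤ m * trace (S*S)
  have hCS : (Matrix.trace S)^2 ≤ (m:ℝ) * Matrix.trace (S * S) := by
    have h2 : Matrix.trace (S*S) = ∑ k, ∑ l, S k l ^ 2 := by
      unfold Matrix.trace
      simp only [Matrix.diag, Matrix.mul_apply]
      refine Finset.sum_congr rfl fun k _ => Finset.sum_congr rfl fun l _ => ?_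
      rw [hSsymm k l]; ring
    have h1 : (∑ k, S k k)^2 ≤ (m:ℝ) * ∑ k, (S k k)^2 := by
      have := sq_sum_le_card_mul_sum_sq (s := (Finset.univ : Finset (Fin m)))
        (f := fun k => S k k)
      simpa using this
    have h3 : ∑ k, (S k k)^2 ≤ ∑ k, ∑ l, S k l ^ 2 := by
      refine Finset.sum_le_sum fun k _ => ?_
      exact Finset.single_le_sum (fun l _ => sq_nonneg (S k l)) (Finset.mem_univ k)
    calc (Matrix.trace S)^2 = (∑ k, S k k)^2 := rfl
      _ ≤ (m:ℝ) * ∑ k, (S k k)^2 := h1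
      _ ≤ (m:ℝ) * ∑ k, ∑ l, S k l ^ 2 := by
          exact mul_le_mul_of_nonneg_left h3 (le_of_lt hm')
      _ = (m:ℝ) * Matrix.trace (S*S) := by rw [h2]
  have htotal : ((N:ℝ) * n)^2 / m ≤ ∑ i, ∑ j, t i j := by
    rw [div_le_iff₀ hm']
    rw [← htrS, ← hSS]
    nlinarith [hCS]
  -- split into diagonal and off-diagonal
  have hsplit : (∑ i, ∑ j, t i j)
      = (∑ i, t i i) + ∑ p ∈ Finset.univ.offDiag, t p.1 p.2 := by
    rw [← Finset.sum_product']
    rw [← Finset.diag_union_offDiag,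
      Finset.sum_union (Finset.disjoint_diag_offDiag _), Finset.sum_diag]
  have hdiag : (∑ i, t i i) = (N:ℝ) * n := by
    have : ∀ i, t i i = (n:ℝ) := fun i => by rw [ht]; simp only; rw [hidem i, htr i]
    simp [this, Finset.sum_const, mul_comm]
  set c : ℝ := (n:ℝ) * ((N:ℝ) * n - m) / (m * ((N:ℝ) - 1)) with hc
  have hoff : (N:ℝ) * ((N:ℝ) - 1) * c ≤ ∑ p ∈ Finset.univ.offDiag, t p.1 p.2 := by
    have h1 : (N:ℝ) * ((N:ℝ)-1) * c = ((N:ℝ)*n)^2/m - (N:ℝ)*n := by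
      rw [hc]; field_simp
    have := htotal
    rw [hsplit, hdiag] at this
    linarith
  -- pigeonhole
  have hcard : ((Finset.univ.offDiag : Finset (Fin N × Fin N)).card : ℝ)
      = (N:ℝ) * ((N:ℝ) - 1) := by
    rw [Finset.offDiag_card]
    simp only [Finset.card_univ, Fintype.card_fin]
    have hle : N ≤ N * N := Nat.le_mul_of_pos_left N (by omega)
    push_cast [Nat.cast_sub hle]
    ring
  have hne : (Finset.univ.offDiag : Finset (Fin N × Fin N)).Nonempty := by
    refine ⟨(⟨0, by omega⟩, ⟨1, by omega⟩), ?_⟩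
    rw [Finset.mem_offDiag]
    refine ⟨Finset.mem_univ _, Finset.mem_univ _, ?_⟩
    intro h
    have := congrArg Fin.val h
    simp at this
  obtain ⟨p, hp, hcp⟩ : ∃ p ∈ (Finset.univ.offDiag : Finset (Fin N × Fin N)),
      c ≤ t p.1 p.2 := by
    by_contra hcon
    push_neg at hcon
    have : ∑ p ∈ Finset.univ.offDiag, t p.1 p.2
        < ∑ _p ∈ (Finset.univ.offDiag : Finset (Fin N × Fin N)), c := by
      exact Finset.sum_lt_sum_of_nonempty hne fun p hp => hcon p hp
    rw [Finset.sum_const, nsmul_eq_mul, hcard] at this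
    linarith
  rw [Finset.mem_offDiag] at hp
  refine ⟨p.1, p.2, hp.2.2, ?_⟩
  have hkey : (n:ℝ) - c = ((n : ℝ) * ((m : ℝ) - n) / m) * ((N : ℝ) / ((N : ℝ) - 1)) := by
    rw [hc]; field_simp; ring
  have : (n:ℝ) - t p.1 p.2 ≤ (n:ℝ) - c := by linarith
  rw [hkey] at this
  exact this
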